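/- The braid group symmetry T̃_i on Ũ_v(g) commutes with the bar anti-involution: for all u ∈ Ũ_v(g), the bar of T̃_i(u) equals T̃_i(ū). -/

import Mathlib

/-!
The Drinfeld double quantum group `Ũ_v(g)` (with invertible `K_i`, `K_i'`) of a
simply-laced Cartan matrix, over `ℚ(v^{1/2})` (modelled as `RatFunc ℚ` with
`u = v^{1/2}` the indeterminate, `v = u²`).
-/

noncomputable section

/-- `u = v^{1/2}`. -/
def u : RatFunc ℚ := RatFunc.X

/-- `v = u²`. -/
def v : RatFunc ℚ := u ^ 2

/-- Quantum integer `[r]` (in `v`). -/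
def qint (r : ℤ) : RatFunc ℚ := (v ^ r - v ^ (-r)) / (v - v⁻¹)

/-- Quantum factorial. -/
def qfact (n : ℕ) : RatFunc ℚ := ∏ i ∈ Finset.range n, qint ((i : ℤ) + 1)

/-- Gaussian binomial coefficient. -/
def qbinom (m : ℤ) (r : ℕ) : RatFunc ℚ :=
  (∏ i ∈ Finset.range r, qint (m - (i : ℤ))) / qfact r

/-- Generators of `Ũ_v(g)`: `E i`, `F i`, `K i`, `K' i` and the inverses
`Ki i = K i⁻¹`, `K'i i = (K' i)⁻¹`. -/
inductive Gen (I : Type) where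
  | E : I → Gen I
  | F : I → Gen I
  | K : I → Gen I
  | K' : I → Gen I
  | Ki : I → Gen I
  | K'i : I → Gen I

open FreeAlgebra in
/-- The defining relations of `Ũ_v(g)`. -/
inductive QGRel (I : Type) [DecidableEq I] (c : I → I → ℤ) :
    FreeAlgebra (RatFunc ℚ) (Gen I) → FreeAlgebra (RatFunc ℚ) (Gen I) → Prop
  | EF (i j : I) :
      QGRel I c (ι _ (Gen.E i) * ι _ (Gen.F j) - ι _ (Gen.F j) * ι _ (Gen.E i))
        (if i = j then (v⁻¹ - v) • (ι _ (Gen.K i) - ι _ (Gen.K' i)) else 0)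
  | KK (i j : I) : QGRel I c (ι _ (Gen.K i) * ι _ (Gen.K j)) (ι _ (Gen.K j) * ι _ (Gen.K i))
  | KK' (i j : I) : QGRel I c (ι _ (Gen.K i) * ι _ (Gen.K' j)) (ι _ (Gen.K' j) * ι _ (Gen.K i))
  | K'K' (i j : I) : QGRel I c (ι _ (Gen.K' i) * ι _ (Gen.K' j)) (ι _ (Gen.K' j) * ι _ (Gen.K' i))
  | Kinv (i : I) : QGRel I c (ι _ (Gen.K i) * ι _ (Gen.Ki i)) 1
  | invK (i : I) : QGRel I c (ι _ (Gen.Ki i) * ι _ (Gen.K i)) 1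
  | K'inv (i : I) : QGRel I c (ι _ (Gen.K' i) * ι _ (Gen.K'i i)) 1
  | invK' (i : I) : QGRel I c (ι _ (Gen.K'i i) * ι _ (Gen.K' i)) 1
  | KE (i j : I) :
      QGRel I c (ι _ (Gen.K i) * ι _ (Gen.E j)) ((v ^ (c i j)) • (ι _ (Gen.E j) * ι _ (Gen.K i)))
  | KF (i j : I) :
      QGRel I c (ι _ (Gen.K i) * ι _ (Gen.F j)) ((v ^ (-c i j)) • (ι _ (Gen.F j) * ι _ (Gen.K i)))
  | K'E (i j : I) :
      QGRel I c (ι _ (Gen.K' i) * ι _ (Gen.E j)) ((v ^ (-c i j)) • (ι _ (Gen.E j) * ι _ (Gen.K' i)))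
  | K'F (i j : I) :
      QGRel I c (ι _ (Gen.K' i) * ι _ (Gen.F j)) ((v ^ (c i j)) • (ι _ (Gen.F j) * ι _ (Gen.K' i)))
  | serreE (i j : I) (h : i ≠ j) :
      QGRel I c
        (∑ r ∈ Finset.range ((1 - c i j).toNat + 1),
          ((-1 : RatFunc ℚ) ^ r * qbinom (1 - c i j) r) •
            (ι _ (Gen.E i) ^ r * ι _ (Gen.E j) * ι _ (Gen.E i) ^ ((1 - c i j).toNat - r))) 0
  | serreF (i j : I) (h : i ≠ j) :
      QGRel I c
        (∑ r ∈ Finset.range ((1 - c i j).toNat + 1),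
          ((-1 : RatFunc ℚ) ^ r * qbinom (1 - c i j) r) •
            (ι _ (Gen.F i) ^ r * ι _ (Gen.F j) * ι _ (Gen.F i) ^ ((1 - c i j).toNat - r))) 0

/-- The Drinfeld double quantum group `Ũ_v(g)`. -/
def QG (I : Type) [DecidableEq I] (c : I → I → ℤ) : Type := RingQuot (QGRel I c)

instance (I : Type) [DecidableEq I] (c : I → I → ℤ) : Ring (QG I c) :=
  inferInstanceAs (Ring (RingQuot (QGRel I c)))

instance (I : Type) [DecidableEq I] (c : I → I → ℤ) : Algebra (RatFunc ℚ) (QG I c) :=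
  inferInstanceAs (Algebra (RatFunc ℚ) (RingQuot (QGRel I c)))

variable {I : Type} [DecidableEq I] [Fintype I]

/-- Image of a generator in `Ũ_v(g)`. -/
def gen (c : I → I → ℤ) (x : Gen I) : QG I c :=
  RingQuot.mkAlgHom (RatFunc ℚ) (QGRel I c) (FreeAlgebra.ι _ x)

/-- The element `K i ^ m` for `m ∈ ℤ`. -/
def Kzpow (c : I → I → ℤ) (i : I) (m : ℤ) : QG I c :=
  if 0 ≤ m then gen c (Gen.K i) ^ m.toNat else gen c (Gen.Ki i) ^ (-m).toNat

/-- The element `K' i ^ m` for `m ∈ ℤ`. -/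
def K'zpow (c : I → I → ℤ) (i : I) (m : ℤ) : QG I c :=
  if 0 ≤ m then gen c (Gen.K' i) ^ m.toNat else gen c (Gen.K'i i) ^ (-m).toNat

/-- `K_μ = ∏ i K_i^{μ_i}` (the factors pairwise commute, so any enumeration order
gives the same element). -/
def Kmu (c : I → I → ℤ) (μ : I → ℤ) : QG I c :=
  ((Finset.univ : Finset I).toList.map (fun i => Kzpow c i (μ i))).prod

/-- `K'_μ = ∏ i (K'_i)^{μ_i}`. -/
def K'mu (c : I → I → ℤ) (μ : I → ℤ) : QG I c :=
  ((Finset.univ : Finset I).toList.map (fun i => K'zpow c i (μ i))).prod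

/-- The simple reflection `s_i` on the root lattice `ℤ^I`, `s_i(α_j) = α_j − c_{ij} α_i`,
written in coordinates. -/
def si (c : I → I → ℤ) (i : I) (μ : I → ℤ) : I → ℤ :=
  fun k => if k = i then μ i - ∑ j, c i j * μ j else μ k

namespace BraidAux

lemma u_ne_zero : u ≠ 0 := RatFunc.X_ne_zero
lemma v_ne_zero : v ≠ 0 := pow_ne_zero _ u_ne_zero

/-- substitution `X ↦ X⁻¹` on polynomials, landing in `RatFunc ℚ`. -/
def polybar : Polynomial ℚ →+* RatFunc ℚ :=
  Polynomial.eval₂RingHom (algebraMap ℚ (RatFunc ℚ)) u⁻¹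

lemma algebraMap_poly_eq (p : Polynomial ℚ) :
    Polynomial.eval₂ (algebraMap ℚ (RatFunc ℚ)) u p
      = algebraMap (Polynomial ℚ) (RatFunc ℚ) p := by
  have h : (Polynomial.eval₂RingHom (algebraMap ℚ (RatFunc ℚ)) u)
      = algebraMap (Polynomial ℚ) (RatFunc ℚ) := by
    apply Polynomial.ringHom_ext
    · intro a
      simp [RatFunc.algebraMap_C]
    · simp [u, RatFunc.algebraMap_X]

  calc Polynomial.eval₂ (algebraMap ℚ (RatFunc ℚ)) u p
      = Polynomial.eval₂RingHom (algebraMap ℚ (RatFunc ℚ)) u p := rfl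
    _ = algebraMap (Polynomial ℚ) (RatFunc ℚ) p := by rw [h]

lemma polybar_ne_zero {p : Polynomial ℚ} (hp : p ≠ 0) : polybar p ≠ 0 := by
  classical
  set N := p.natDegree with hN
  set q := Polynomial.reflect N p with hq
  have hq0 : q ≠ 0 := by
    simpa [hq] using (Polynomial.reflect_eq_zero_iff (N := N)).ne.mpr hp
  have hqdeg : q.natDegree ≤ N := by
    refine Polynomial.natDegree_le_iff_coeff_eq_zero.mpr fun m hm => ?_
    rw [hq, Polynomial.coeff_reflect, Polynomial.revAt_eq_self_of_lt hm]
    exact Polynomial.coeff_eq_zero_of_natDegree_lt hm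
  have hrefl : Polynomial.reflect N q = p := by
    ext m
    rw [Polynomial.coeff_reflect, hq, Polynomial.coeff_reflect, Polynomial.revAt_invol]
  letI : Invertible u := invertibleOfNonzero u_ne_zero
  have h := Polynomial.eval₂_reflect_eq_zero_iff (algebraMap ℚ (RatFunc ℚ)) u N q hqdeg
  rw [hrefl, invOf_eq_inv u, algebraMap_poly_eq] at h
  intro h0
  exact RatFunc.algebraMap_ne_zero hq0 (h.mp h0)


lemma u_pow4_ne_one : u ^ 4 ≠ 1 := by
  rw [u, ← RatFunc.algebraMap_X (K := ℚ), ← map_pow,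
    ← map_one (algebraMap (Polynomial ℚ) (RatFunc ℚ))]
  intro h
  have h2 := RatFunc.algebraMap_injective ℚ h
  simpa using congrArg Polynomial.natDegree h2

lemma w_ne_zero : v - v⁻¹ ≠ 0 := by
  intro h
  apply u_pow4_ne_one
  have h' : v = v⁻¹ := sub_eq_zero.mp h
  calc u ^ 4 = v * v := by rw [v]; ring
    _ = v * v⁻¹ := by rw [← h']
    _ = 1 := mul_inv_cancel₀ v_ne_zero

lemma u_zpow_two : u ^ (2 : ℤ) = v := by
  rw [v, show (2 : ℤ) = ((2 : ℕ) : ℤ) from rfl, zpow_natCast]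

lemma v_zpow_two : v ^ (2 : ℤ) = v * v := by
  rw [show (2 : ℤ) = ((2 : ℕ) : ℤ) from rfl, zpow_natCast, pow_two]

lemma polybar_monomial (n : ℕ) (a : ℚ) :
    polybar (Polynomial.monomial n a) = (a : RatFunc ℚ) * u ^ (-(n : ℤ)) := by
  have : polybar (Polynomial.monomial n a)
      = algebraMap ℚ (RatFunc ℚ) a * (u⁻¹) ^ n := by
    simp [polybar, Polynomial.eval₂_monomial]
  rw [this, eq_ratCast (algebraMap ℚ (RatFunc ℚ)) a, inv_pow, zpow_neg, zpow_natCast]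

end BraidAux

open BraidAux


/-- the braid group symmetry `T̃_i` commutes with the bar anti-involution:
for any map `bar` satisfying the defining properties of the bar involution and any ring
endomorphism `T` satisfying the defining formulas of `T̃_i`, one has
`bar (T u) = T (bar u)` for all `u ∈ Ũ_v(g)`. -/
theorem braid_commutes_with_bar (I : Type) [DecidableEq I] [Fintype I]
    (c : I → I → ℤ) (hdiag : ∀ i, c i i = 2) (hsym : ∀ i j, c i j = c j i)
    (hoff : ∀ i j, i ≠ j → c i j = 0 ∨ c i j = -1) (i : I)
    (bar : QG I c → QG I c)
    (hbadd : ∀ x y, bar (x + y) = bar x + bar y)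
    (hbmul : ∀ x y, bar (x * y) = bar y * bar x)
    (hbone : bar 1 = 1)
    (hbq : ∀ (q : ℚ) (x : QG I c), bar ((q : RatFunc ℚ) • x) = (q : RatFunc ℚ) • bar x)
    (hbu : ∀ (n : ℤ) (x : QG I c), bar ((u ^ n) • x) = (u ^ (-n)) • bar x)
    (hbE : ∀ j, bar (gen c (Gen.E j)) = gen c (Gen.E j))
    (hbF : ∀ j, bar (gen c (Gen.F j)) = gen c (Gen.F j))
    (hbK : ∀ j, bar (gen c (Gen.K j)) = gen c (Gen.K j))
    (hbK' : ∀ j, bar (gen c (Gen.K' j)) = gen c (Gen.K' j))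
    (hbKi : ∀ j, bar (gen c (Gen.Ki j)) = gen c (Gen.Ki j))
    (hbK'i : ∀ j, bar (gen c (Gen.K'i j)) = gen c (Gen.K'i j))
    (T : QG I c →ₐ[RatFunc ℚ] QG I c)
    (hTK : ∀ μ : I → ℤ, T (Kmu c μ) = Kmu c (si c i μ))
    (hTK' : ∀ μ : I → ℤ, T (K'mu c μ) = K'mu c (si c i μ))
    (hTEi : T (gen c (Gen.E i)) = v • (gen c (Gen.K'i i) * gen c (Gen.F i)))
    (hTFi : T (gen c (Gen.F i)) = v⁻¹ • (gen c (Gen.E i) * gen c (Gen.Ki i)))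
    (hT0 : ∀ j, c i j = 0 → T (gen c (Gen.E j)) = gen c (Gen.E j) ∧
      T (gen c (Gen.F j)) = gen c (Gen.F j))
    (hT1 : ∀ j, c i j = -1 →
      T (gen c (Gen.E j)) = (v - v⁻¹)⁻¹ •
        (u • (gen c (Gen.E i) * gen c (Gen.E j)) - u⁻¹ • (gen c (Gen.E j) * gen c (Gen.E i))) ∧
      T (gen c (Gen.F j)) = (v - v⁻¹)⁻¹ •
        (u • (gen c (Gen.F i) * gen c (Gen.F j)) - u⁻¹ • (gen c (Gen.F j) * gen c (Gen.F i)))) :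
    ∀ x : QG I c, bar (T x) = T (bar x) := by
  classical
  -- basic consequences of the bar axioms
  have hbneg : ∀ x : QG I c, bar (-x) = -bar x := by
    intro x
    have h := hbq (-1) x
    simpa using h
  have hbsub : ∀ x y : QG I c, bar (x - y) = bar x - bar y := by
    intro x y
    rw [sub_eq_add_neg, hbadd, hbneg, sub_eq_add_neg]
  have hbU : ∀ x : QG I c, bar (u • x) = u⁻¹ • bar x := by
    intro x
    have h := hbu 1 x
    simpa using h
  have hbUinv : ∀ x : QG I c, bar (u⁻¹ • x) = u • bar x := by
    intro x
    have h := hbu (-1) x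
    simpa using h
  have hbv : ∀ x : QG I c, bar (v • x) = v⁻¹ • bar x := by
    intro x
    have h := hbu 2 x
    rw [zpow_neg, u_zpow_two] at h
    exact h
  have hbvinv : ∀ x : QG I c, bar (v⁻¹ • x) = v • bar x := by
    intro x
    have h := hbu (-2) x
    rw [neg_neg, zpow_neg, u_zpow_two] at h
    exact h
  have hw' : v⁻¹ - v ≠ 0 := by
    rw [show v⁻¹ - v = -(v - v⁻¹) by ring]
    exact neg_ne_zero.mpr w_ne_zero
  have hbW : ∀ x : QG I c, bar ((v - v⁻¹)⁻¹ • x) = (v⁻¹ - v)⁻¹ • bar x := by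
    intro x
    have h1 : bar ((v - v⁻¹) • ((v - v⁻¹)⁻¹ • x)) = (v⁻¹ - v) • bar ((v - v⁻¹)⁻¹ • x) := by
      rw [sub_smul, hbsub, hbv, hbvinv, ← sub_smul]
    rw [smul_smul, mul_inv_cancel₀ w_ne_zero, one_smul] at h1
    rw [h1, smul_smul, inv_mul_cancel₀ hw', one_smul]
  -- bar on polynomial scalars
  have hbP : ∀ (p : Polynomial ℚ) (x : QG I c),
      bar ((algebraMap (Polynomial ℚ) (RatFunc ℚ) p) • x) = polybar p • bar x := by
    intro p x
    induction p using Polynomial.induction_on' with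
    | add p q hp hq => rw [map_add, add_smul, hbadd, hp, hq, map_add, add_smul]
    | monomial n a =>
      have hm : algebraMap (Polynomial ℚ) (RatFunc ℚ) (Polynomial.monomial n a)
          = (a : RatFunc ℚ) * u ^ n := by
        rw [← Polynomial.C_mul_X_pow_eq_monomial, map_mul, map_pow,
          RatFunc.algebraMap_C, RatFunc.algebraMap_X]
        rw [eq_ratCast (RatFunc.C) a]
        rfl
      rw [hm, mul_smul, hbq, ← zpow_natCast u, hbu, polybar_monomial, mul_smul]
  -- bar on arbitrary scalars
  have hbS : ∀ (r : RatFunc ℚ) (x : QG I c),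
      bar (r • x) = (polybar r.num / polybar r.denom) • bar x := by
    intro r x
    have hq0 : polybar r.denom ≠ 0 := polybar_ne_zero (RatFunc.denom_ne_zero r)
    have hd : algebraMap (Polynomial ℚ) (RatFunc ℚ) r.denom ≠ 0 :=
      RatFunc.algebraMap_ne_zero (RatFunc.denom_ne_zero r)
    have hpq : r * algebraMap (Polynomial ℚ) (RatFunc ℚ) r.denom
        = algebraMap (Polynomial ℚ) (RatFunc ℚ) r.num :=
      (eq_div_iff hd).mp (RatFunc.num_div_denom r).symm
    have e : polybar r.denom • bar (r • x) = polybar r.num • bar x := by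
      calc polybar r.denom • bar (r • x)
          = bar ((algebraMap (Polynomial ℚ) (RatFunc ℚ) r.denom) • (r • x)) := (hbP _ _).symm
        _ = bar (((algebraMap (Polynomial ℚ) (RatFunc ℚ) r.denom) * r) • x) := by
            rw [mul_smul]
        _ = bar ((algebraMap (Polynomial ℚ) (RatFunc ℚ) r.num) • x) := by
            rw [mul_comm, hpq]
        _ = polybar r.num • bar x := hbP _ _
    calc bar (r • x)
        = (polybar r.denom)⁻¹ • (polybar r.denom • bar (r • x)) := by
          rw [smul_smul, inv_mul_cancel₀ hq0, one_smul]
      _ = (polybar r.denom)⁻¹ • (polybar r.num • bar x) := by rw [e]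
      _ = (polybar r.num / polybar r.denom) • bar x := by
          rw [smul_smul, ← div_eq_inv_mul]
  -- relations in the quotient
  have rel : ∀ {x y : FreeAlgebra (RatFunc ℚ) (Gen I)}, QGRel I c x y →
      RingQuot.mkAlgHom (RatFunc ℚ) (QGRel I c) x
        = RingQuot.mkAlgHom (RatFunc ℚ) (QGRel I c) y :=
    fun h => RingQuot.mkAlgHom_rel _ h
  have hKK : ∀ a b : I, gen c (Gen.K a) * gen c (Gen.K b) = gen c (Gen.K b) * gen c (Gen.K a) := by
    intro a b
    have h := rel (QGRel.KK a b)
    simp only [map_mul] at h; exact h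
  have hK'K' : ∀ a b : I,
      gen c (Gen.K' a) * gen c (Gen.K' b) = gen c (Gen.K' b) * gen c (Gen.K' a) := by
    intro a b
    have h := rel (QGRel.K'K' a b)
    simp only [map_mul] at h; exact h
  have hKinv : ∀ a : I, gen c (Gen.K a) * gen c (Gen.Ki a) = 1 := by
    intro a
    have h := rel (QGRel.Kinv a)
    simp only [map_mul, map_one] at h; exact h
  have hinvK : ∀ a : I, gen c (Gen.Ki a) * gen c (Gen.K a) = 1 := by
    intro a
    have h := rel (QGRel.invK a)
    simp only [map_mul, map_one] at h; exact h
  have hK'inv : ∀ a : I, gen c (Gen.K' a) * gen c (Gen.K'i a) = 1 := by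
    intro a
    have h := rel (QGRel.K'inv a)
    simp only [map_mul, map_one] at h; exact h
  have hinvK' : ∀ a : I, gen c (Gen.K'i a) * gen c (Gen.K' a) = 1 := by
    intro a
    have h := rel (QGRel.invK' a)
    simp only [map_mul, map_one] at h; exact h
  have hKE : ∀ a b : I, gen c (Gen.K a) * gen c (Gen.E b)
      = (v ^ (c a b)) • (gen c (Gen.E b) * gen c (Gen.K a)) := by
    intro a b
    have h := rel (QGRel.KE a b)
    simp only [map_mul, map_smul] at h; exact h
  have hK'F : ∀ a b : I, gen c (Gen.K' a) * gen c (Gen.F b)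
      = (v ^ (c a b)) • (gen c (Gen.F b) * gen c (Gen.K' a)) := by
    intro a b
    have h := rel (QGRel.K'F a b)
    simp only [map_mul, map_smul] at h; exact h
  -- units and commutation of Cartan generators
  let uK : I → (QG I c)ˣ := fun a => ⟨gen c (Gen.K a), gen c (Gen.Ki a), hKinv a, hinvK a⟩
  let uK' : I → (QG I c)ˣ := fun a => ⟨gen c (Gen.K' a), gen c (Gen.K'i a), hK'inv a, hinvK' a⟩
  have cKK : ∀ a b : I, Commute (gen c (Gen.K a)) (gen c (Gen.K b)) := fun a b => hKK a b
  have cKiK : ∀ a b : I, Commute (gen c (Gen.Ki a)) (gen c (Gen.K b)) := by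
    intro a b
    exact (Commute.units_inv_right (u := uK a) (cKK b a)).symm
  have cKKi : ∀ a b : I, Commute (gen c (Gen.K a)) (gen c (Gen.Ki b)) :=
    fun a b => (cKiK b a).symm
  have cKiKi : ∀ a b : I, Commute (gen c (Gen.Ki a)) (gen c (Gen.Ki b)) := by
    intro a b
    exact Commute.units_inv_right (u := uK b) (cKiK a b)
  have cK'K' : ∀ a b : I, Commute (gen c (Gen.K' a)) (gen c (Gen.K' b)) := fun a b => hK'K' a b
  have cK'iK' : ∀ a b : I, Commute (gen c (Gen.K'i a)) (gen c (Gen.K' b)) := by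
    intro a b
    exact (Commute.units_inv_right (u := uK' a) (cK'K' b a)).symm
  have cK'K'i : ∀ a b : I, Commute (gen c (Gen.K' a)) (gen c (Gen.K'i b)) :=
    fun a b => (cK'iK' b a).symm
  have cK'iK'i : ∀ a b : I, Commute (gen c (Gen.K'i a)) (gen c (Gen.K'i b)) := by
    intro a b
    exact Commute.units_inv_right (u := uK' b) (cK'iK' a b)
  have cKz : ∀ (a : I) (m : ℤ) (b : I) (n : ℤ), Commute (Kzpow c a m) (Kzpow c b n) := by
    intro a m b n
    unfold Kzpow
    split_ifs
    · exact (cKK a b).pow_pow _ _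
    · exact (cKKi a b).pow_pow _ _
    · exact (cKiK a b).pow_pow _ _
    · exact (cKiKi a b).pow_pow _ _
  have cK'z : ∀ (a : I) (m : ℤ) (b : I) (n : ℤ), Commute (K'zpow c a m) (K'zpow c b n) := by
    intro a m b n
    unfold K'zpow
    split_ifs
    · exact (cK'K' a b).pow_pow _ _
    · exact (cK'K'i a b).pow_pow _ _
    · exact (cK'iK' a b).pow_pow _ _
    · exact (cK'iK'i a b).pow_pow _ _
  -- bar fixes products of Cartan generators
  have hbpow : ∀ (x : QG I c) (n : ℕ), bar (x ^ n) = bar x ^ n := by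
    intro x n
    induction n with
    | zero => simpa using hbone
    | succ n ih =>
      rw [pow_succ, hbmul, ih, pow_succ]
      exact ((Commute.refl (bar x)).pow_right n).eq
  have hbprod : ∀ l : List (QG I c), bar l.prod = (l.map bar).reverse.prod := by
    intro l
    induction l with
    | nil => simpa using hbone
    | cons a t ih =>
      rw [List.prod_cons, hbmul, ih, List.map_cons, List.reverse_cons, List.prod_append,
        List.prod_cons, List.prod_nil, mul_one]
  have hbKz : ∀ (a : I) (m : ℤ), bar (Kzpow c a m) = Kzpow c a m := by
    intro a m
    unfold Kzpow
    split_ifs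
    · rw [hbpow, hbK]
    · rw [hbpow, hbKi]
  have hbK'z : ∀ (a : I) (m : ℤ), bar (K'zpow c a m) = K'zpow c a m := by
    intro a m
    unfold K'zpow
    split_ifs
    · rw [hbpow, hbK']
    · rw [hbpow, hbK'i]
  have pairwiseK : ∀ ν : I → ℤ,
      (List.map (fun k => Kzpow c k (ν k)) (Finset.univ : Finset I).toList).Pairwise Commute := by
    intro ν
    refine List.pairwise_map.mpr ?_
    haveI : Std.Refl (fun a b : I => Commute (Kzpow c a (ν a)) (Kzpow c b (ν b))) := ⟨fun a => cKz a (ν a) a (ν a)⟩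
    exact List.pairwise_of_reflexive_of_forall_ne
      (fun a _ b _ _ => cKz a (ν a) b (ν b))
  have pairwiseK' : ∀ ν : I → ℤ,
      (List.map (fun k => K'zpow c k (ν k)) (Finset.univ : Finset I).toList).Pairwise Commute := by
    intro ν
    refine List.pairwise_map.mpr ?_
    haveI : Std.Refl (fun a b : I => Commute (K'zpow c a (ν a)) (K'zpow c b (ν b))) := ⟨fun a => cK'z a (ν a) a (ν a)⟩
    exact List.pairwise_of_reflexive_of_forall_ne
      (fun a _ b _ _ => cK'z a (ν a) b (ν b))
  have hbKmu : ∀ ν : I → ℤ, bar (Kmu c ν) = Kmu c ν := by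
    intro ν
    rw [Kmu, hbprod, List.map_map]
    have h1 : (List.map (bar ∘ fun k => Kzpow c k (ν k)) (Finset.univ : Finset I).toList)
        = List.map (fun k => Kzpow c k (ν k)) (Finset.univ : Finset I).toList :=
      List.map_congr_left (fun a _ => hbKz a (ν a))
    rw [h1]
    exact (List.reverse_perm _).prod_eq'
      (List.pairwise_reverse.mpr ((pairwiseK ν).imp fun h => h.symm))
  have hbK'mu : ∀ ν : I → ℤ, bar (K'mu c ν) = K'mu c ν := by
    intro ν
    rw [K'mu, hbprod, List.map_map]
    have h1 : (List.map (bar ∘ fun k => K'zpow c k (ν k)) (Finset.univ : Finset I).toList)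
        = List.map (fun k => K'zpow c k (ν k)) (Finset.univ : Finset I).toList :=
      List.map_congr_left (fun a _ => hbK'z a (ν a))
    rw [h1]
    exact (List.reverse_perm _).prod_eq'
      (List.pairwise_reverse.mpr ((pairwiseK' ν).imp fun h => h.symm))
  -- single generators as Kmu / K'mu
  have hKsingle : ∀ (j : I) (m : ℤ), Kmu c (Pi.single j m) = Kzpow c j m := by
    intro j m
    set ν : I → ℤ := Pi.single j m with hν
    have hνj : ν j = m := by simp [hν]
    have hνk : ∀ k : I, k ≠ j → ν k = 0 := fun k hk => by
      simp [hν, Pi.single_eq_of_ne hk]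
    have h := List.prod_map_eq_pow_single (l := (Finset.univ : Finset I).toList) j
      (fun k => Kzpow c k (ν k))
      (fun k hk _ => by
        show Kzpow c k (ν k) = 1
        rw [hνk k hk]; simp [Kzpow])
    rw [Kmu, h, List.count_eq_one_of_mem (Finset.nodup_toList _) (by simp [Finset.mem_toList]),
      pow_one]
    show Kzpow c j (ν j) = Kzpow c j m
    rw [hνj]
  have hK'single : ∀ (j : I) (m : ℤ), K'mu c (Pi.single j m) = K'zpow c j m := by
    intro j m
    set ν : I → ℤ := Pi.single j m with hν
    have hνj : ν j = m := by simp [hν]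
    have hνk : ∀ k : I, k ≠ j → ν k = 0 := fun k hk => by
      simp [hν, Pi.single_eq_of_ne hk]
    have h := List.prod_map_eq_pow_single (l := (Finset.univ : Finset I).toList) j
      (fun k => K'zpow c k (ν k))
      (fun k hk _ => by
        show K'zpow c k (ν k) = 1
        rw [hνk k hk]; simp [K'zpow])
    rw [K'mu, h, List.count_eq_one_of_mem (Finset.nodup_toList _) (by simp [Finset.mem_toList]),
      pow_one]
    show K'zpow c j (ν j) = K'zpow c j m
    rw [hνj]
  have hgenK : ∀ j : I, gen c (Gen.K j) = Kmu c (Pi.single j 1) := by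
    intro j
    rw [hKsingle]
    norm_num [Kzpow]
  have hgenKi : ∀ j : I, gen c (Gen.Ki j) = Kmu c (Pi.single j (-1)) := by
    intro j
    rw [hKsingle]
    norm_num [Kzpow]
  have hgenK' : ∀ j : I, gen c (Gen.K' j) = K'mu c (Pi.single j 1) := by
    intro j
    rw [hK'single]
    norm_num [K'zpow]
  have hgenK'i : ∀ j : I, gen c (Gen.K'i j) = K'mu c (Pi.single j (-1)) := by
    intro j
    rw [hK'single]
    norm_num [K'zpow]
  -- sandwich identities
  have s1 : gen c (Gen.K' i) * gen c (Gen.F i)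
      = (v * v) • (gen c (Gen.F i) * gen c (Gen.K' i)) := by
    rw [hK'F i i, hdiag i, v_zpow_two]
  have s2 : gen c (Gen.F i) * gen c (Gen.K'i i)
      = (v * v) • (gen c (Gen.K'i i) * gen c (Gen.F i)) := by
    have h := congrArg (fun z => gen c (Gen.K'i i) * z * gen c (Gen.K'i i)) s1
    simp only [smul_mul_assoc, mul_smul_comm] at h
    rw [show gen c (Gen.K'i i) * (gen c (Gen.K' i) * gen c (Gen.F i)) * gen c (Gen.K'i i)
        = (gen c (Gen.K'i i) * gen c (Gen.K' i)) * (gen c (Gen.F i) * gen c (Gen.K'i i)) by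
      noncomm_ring] at h
    rw [show gen c (Gen.K'i i) * (gen c (Gen.F i) * gen c (Gen.K' i)) * gen c (Gen.K'i i)
        = (gen c (Gen.K'i i) * gen c (Gen.F i)) * (gen c (Gen.K' i) * gen c (Gen.K'i i)) by
      noncomm_ring] at h
    rw [hinvK' i, one_mul, hK'inv i, mul_one] at h
    exact h
  have s3 : gen c (Gen.K i) * gen c (Gen.E i)
      = (v * v) • (gen c (Gen.E i) * gen c (Gen.K i)) := by
    rw [hKE i i, hdiag i, v_zpow_two]
  have s4 : gen c (Gen.E i) * gen c (Gen.Ki i)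
      = (v * v) • (gen c (Gen.Ki i) * gen c (Gen.E i)) := by
    have h := congrArg (fun z => gen c (Gen.Ki i) * z * gen c (Gen.Ki i)) s3
    simp only [smul_mul_assoc, mul_smul_comm] at h
    rw [show gen c (Gen.Ki i) * (gen c (Gen.K i) * gen c (Gen.E i)) * gen c (Gen.Ki i)
        = (gen c (Gen.Ki i) * gen c (Gen.K i)) * (gen c (Gen.E i) * gen c (Gen.Ki i)) by
      noncomm_ring] at h
    rw [show gen c (Gen.Ki i) * (gen c (Gen.E i) * gen c (Gen.K i)) * gen c (Gen.Ki i)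
        = (gen c (Gen.Ki i) * gen c (Gen.E i)) * (gen c (Gen.K i) * gen c (Gen.Ki i)) by
      noncomm_ring] at h
    rw [hinvK i, one_mul, hKinv i, mul_one] at h
    exact h
  -- main induction
  intro x
  let f : FreeAlgebra (RatFunc ℚ) (Gen I) →ₐ[RatFunc ℚ] QG I c := RingQuot.mkAlgHom (RatFunc ℚ) (QGRel I c)
  obtain ⟨y, rfl⟩ : ∃ y, f y = x := RingQuot.mkAlgHom_surjective (RatFunc ℚ) (QGRel I c) x
  induction y using FreeAlgebra.induction with
  | add a b ha hb => simp only [map_add, hbadd, ha, hb]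
  | mul a b ha hb => simp only [map_mul, hbmul, ha, hb]
  | grade0 r =>
    simp only [AlgHom.commutes]
    simp only [Algebra.algebraMap_eq_smul_one, hbS, hbone, map_smul, map_one]
  | grade1 g =>
    cases g with
    | E j =>
      show bar (T (gen c (Gen.E j))) = T (bar (gen c (Gen.E j)))
      rw [hbE]
      by_cases hj : j = i
      · subst hj
        rw [hTEi, hbv, hbmul, hbF, hbK'i, s2, smul_smul, inv_mul_cancel_left₀ v_ne_zero]
      · rcases hoff i j (fun h => hj h.symm) with h0 | h1
        · rw [(hT0 j h0).1, hbE]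
        · rw [(hT1 j h1).1, hbW, hbsub, hbU, hbUinv]
          simp only [hbmul, hbE]
          rw [show v⁻¹ - v = -(v - v⁻¹) by ring, inv_neg, neg_smul, ← smul_neg, neg_sub]
    | F j =>
      show bar (T (gen c (Gen.F j))) = T (bar (gen c (Gen.F j)))
      rw [hbF]
      by_cases hj : j = i
      · subst hj
        rw [hTFi, hbvinv, hbmul, hbE, hbKi, s4, smul_smul, inv_mul_cancel_left₀ v_ne_zero]
      · rcases hoff i j (fun h => hj h.symm) with h0 | h1
        · rw [(hT0 j h0).2, hbF]
        · rw [(hT1 j h1).2, hbW, hbsub, hbU, hbUinv]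
          simp only [hbmul, hbF]
          rw [show v⁻¹ - v = -(v - v⁻¹) by ring, inv_neg, neg_smul, ← smul_neg, neg_sub]
    | K j =>
      show bar (T (gen c (Gen.K j))) = T (bar (gen c (Gen.K j)))
      rw [hgenK j]
      simp only [hTK, hbKmu]
    | Ki j =>
      show bar (T (gen c (Gen.Ki j))) = T (bar (gen c (Gen.Ki j)))
      rw [hgenKi j]
      simp only [hTK, hbKmu]
    | K' j =>
      show bar (T (gen c (Gen.K' j))) = T (bar (gen c (Gen.K' j)))
      rw [hgenK' j]
      simp only [hTK', hbK'mu]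
    | K'i j =>
      show bar (T (gen c (Gen.K'i j))) = T (bar (gen c (Gen.K'i j)))
      rw [hgenK'i j]
      simp only [hTK', hbK'mu]
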